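/- Let F be a field with char F ∉ {2,3} and let A be the Matsuo algebra of the affine plane of order 3 over F. Then the element (1/3) Σ_{u∈P} p_u is a two-sided multiplicative identity of A. -/
import Mathlib


open Finset

/-- The Matsuo algebra `M_{1/2}(P3)` of the affine plane of order 3 over `F`: the free
`F`-module on the point set `P = (ℤ/3)²`, with the commutative bilinear multiplication
determined by `p_u p_u = p_u` and `p_u p_v = (1/4)(p_u + p_v − p_{−u−v})` for `u ≠ v`. -/
noncomputable def mMul (F : Type*) [Field F] (x y : ZMod 3 × ZMod 3 → F) :
    ZMod 3 × ZMod 3 → F :=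
  ∑ u : ZMod 3 × ZMod 3, ∑ v : ZMod 3 × ZMod 3,
    (x u * y v) •
      (if u = v then Pi.single u (1 : F)
       else (4⁻¹ : F) • (Pi.single u (1 : F) + Pi.single v (1 : F) -
         Pi.single (-u - v) (1 : F)) : ZMod 3 × ZMod 3 → F)

/-- The sum `Σ_{u ∈ s} p_u` in the Matsuo algebra. -/
noncomputable def pSum (F : Type*) [Field F] (s : Finset (ZMod 3 × ZMod 3)) :
    ZMod 3 × ZMod 3 → F :=
  ∑ u ∈ s, Pi.single u 1

/-- The line of the affine plane of order 3 through `a` with direction `w`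
(a coset of the 1-dimensional subspace spanned by `w`). -/
def lineThru (a w : ZMod 3 × ZMod 3) : Finset (ZMod 3 × ZMod 3) :=
  Finset.image (fun t : ZMod 3 => a + t • w) Finset.univ

lemma neg_sub_ne {u v : ZMod 3 × ZMod 3} (h : u ≠ v) : -u - v ≠ v := by
  intro hc
  apply h
  have h3 : v + v + v = 0 := by
    have : ∀ a : ZMod 3 × ZMod 3, a + a + a = 0 := by decide
    exact this v
  have : u = -(-u - v) - v := by ring
  rw [hc] at this
  rw [this]; linear_combination -h3

lemma key (F : Type*) [Field F] (h2 : (2 : F) ≠ 0) (v : ZMod 3 × ZMod 3) :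
    ∑ u : ZMod 3 × ZMod 3,
      (if u = v then Pi.single u (1 : F)
       else (4⁻¹ : F) • (Pi.single u (1 : F) + Pi.single v (1 : F) -
         Pi.single (-u - v) (1 : F)) : ZMod 3 × ZMod 3 → F)
    = (3 : F) • (Pi.single v (1 : F) : ZMod 3 × ZMod 3 → F) := by
  rw [← Finset.add_sum_erase _ _ (Finset.mem_univ v)]
  rw [if_pos rfl]
  rw [Finset.sum_congr rfl (fun u hu => if_neg (Finset.ne_of_mem_erase hu))]
  have hB : ∑ u ∈ Finset.univ.erase v, Pi.single (-u - v) (1 : F)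
      = ∑ u ∈ Finset.univ.erase v, Pi.single u (1 : F) := by
    apply Finset.sum_nbij' (i := fun u => -u - v) (j := fun u => -u - v)
    · intro a ha
      simp only [Finset.mem_erase, Finset.mem_univ, and_true] at ha ⊢
      exact neg_sub_ne ha
    · intro a ha
      simp only [Finset.mem_erase, Finset.mem_univ, and_true] at ha ⊢
      exact neg_sub_ne ha
    · intro a _; ring
    · intro a _; ring
    · intro a _; rfl
  have hcard : (Finset.univ.erase v).card = 8 := by
    rw [Finset.card_erase_of_mem (Finset.mem_univ v)]
    simp
  rw [← Finset.smul_sum, Finset.sum_sub_distrib, Finset.sum_add_distrib,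
    Finset.sum_const, hcard, hB]
  have h4 : (4 : F) ≠ 0 := by
    intro h; apply h2
    have h' : (4 : F) = 2 * 2 := by norm_num
    rw [h'] at h
    rcases mul_eq_zero.mp h with h | h <;> exact h
  match_scalars <;> (field_simp; try norm_num)

lemma mMul_comm (F : Type*) [Field F] (x y : ZMod 3 × ZMod 3 → F) :
    mMul F x y = mMul F y x := by
  unfold mMul
  rw [Finset.sum_comm]
  apply Finset.sum_congr rfl; intro v _
  apply Finset.sum_congr rfl; intro u _
  rw [mul_comm (y v) (x u)]
  congr 1
  by_cases h : u = v
  · subst h; simp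
  · rw [if_neg h, if_neg (Ne.symm h)]
    rw [show -u - v = -v - u from by ring]
    module

/-- If `char F ∉ {2,3}`, the element `(1/3) Σ_{u∈P} p_u` is a two-sided
multiplicative identity of the Matsuo algebra of the affine plane of order 3. -/
theorem stmt_5 (F : Type*) [Field F] (h2 : (2 : F) ≠ 0) (h3 : (3 : F) ≠ 0) :
    ∀ x : ZMod 3 × ZMod 3 → F,
      mMul F ((3⁻¹ : F) • pSum F Finset.univ) x = x ∧
      mMul F x ((3⁻¹ : F) • pSum F Finset.univ) = x := by
  have main : ∀ x : ZMod 3 × ZMod 3 → F, mMul F ((3⁻¹ : F) • pSum F Finset.univ) x = x := by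
    intro x
    have he : ∀ u, ((3⁻¹ : F) • pSum F Finset.univ) u = 3⁻¹ := by
      intro u
      simp [pSum, Finset.sum_apply, Pi.single_apply]
    unfold mMul
    rw [Finset.sum_comm]
    calc ∑ v : ZMod 3 × ZMod 3, ∑ u : ZMod 3 × ZMod 3,
          (((3⁻¹ : F) • pSum F Finset.univ) u * x v) •
          (if u = v then Pi.single u (1 : F)
           else (4⁻¹ : F) • (Pi.single u (1 : F) + Pi.single v (1 : F) -
             Pi.single (-u - v) (1 : F)) : ZMod 3 × ZMod 3 → F)
        = ∑ v : ZMod 3 × ZMod 3, (3⁻¹ * x v) • ∑ u : ZMod 3 × ZMod 3,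
          (if u = v then Pi.single u (1 : F)
           else (4⁻¹ : F) • (Pi.single u (1 : F) + Pi.single v (1 : F) -
             Pi.single (-u - v) (1 : F)) : ZMod 3 × ZMod 3 → F) := by
          apply Finset.sum_congr rfl; intro v _
          rw [Finset.smul_sum]
          apply Finset.sum_congr rfl; intro u _
          rw [he u]
      _ = x := by
          rw [Finset.sum_congr rfl (fun v _ => by rw [key F h2 v])]
          funext w
          rw [Finset.sum_apply]
          simp only [Pi.smul_apply, Pi.single_apply, smul_eq_mul, mul_ite, mul_one, mul_zero]
          rw [Finset.sum_ite_eq Finset.univ w (fun v => 3⁻¹ * x v * 3)]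
          simp only [Finset.mem_univ, if_true]
          field_simp
          try ring
  intro x
  refine ⟨main x, ?_⟩
  rw [mMul_comm]
  exact main x
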